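/- Let σ, σ' ∈ S_n with σ' = τ_i · σ for an adjacent transposition τ_i = (i, i+1), and suppose the Coxeter length of σ' is strictly greater than that of σ. Then R(σ') > R(σ), where R(σ) = ∏_{i=1}^n l_i(σ) is the tree realization number. -/

import Mathlib

open Finset

/-- The `i`-th entry of the left inversion vector: `l_i(σ) = #{j ≤ i : σ(j) ≥ σ(i)}`. -/
def linv {n : ℕ} (σ : Equiv.Perm (Fin n)) (i : Fin n) : ℕ :=
  (Finset.univ.filter (fun j : Fin n => j ≤ i ∧ σ i ≤ σ j)).card

/-- The tree realization number `R(σ) = ∏ᵢ l_i(σ)`. -/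
def TRN {n : ℕ} (σ : Equiv.Perm (Fin n)) : ℕ := ∏ i, linv σ i

/-- A permutation is an adjacent transposition `(i, i+1)`. -/
def IsAdjTransp {n : ℕ} (τ : Equiv.Perm (Fin n)) : Prop :=
  ∃ i : ℕ, ∃ h : i + 1 < n, τ = Equiv.swap ⟨i, Nat.lt_of_succ_lt h⟩ ⟨i + 1, h⟩

/-- The Coxeter length: the minimal number of adjacent transpositions whose
product is `σ`. -/
noncomputable def coxLength {n : ℕ} (σ : Equiv.Perm (Fin n)) : ℕ :=
  sInf {k | ∃ l : List (Equiv.Perm (Fin n)),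
    l.length = k ∧ (∀ τ ∈ l, IsAdjTransp τ) ∧ l.prod = σ}

section Aux

variable {n : ℕ}

lemma linv_pos (σ : Equiv.Perm (Fin n)) (i : Fin n) : 1 ≤ linv σ i := by
  rw [linv, Nat.succ_le_iff, Finset.card_pos]
  exact ⟨i, by simp⟩

/-- Key lemma: the effect of left multiplication by an adjacent transposition
(in the length-increasing direction) on the left inversion vector. -/
lemma linv_swap (σ : Equiv.Perm (Fin n)) (a b : Fin n) (hab : (a : ℕ) + 1 = (b : ℕ))
    (hpq : σ⁻¹ a < σ⁻¹ b) (j : Fin n) :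
    linv (Equiv.swap a b * σ) j = linv σ j + (if j = σ⁻¹ b then 1 else 0) := by
  set p := σ⁻¹ a with hp
  set q := σ⁻¹ b with hq
  have hσp : σ p = a := Equiv.apply_symm_apply σ a
  have hσq : σ q = b := Equiv.apply_symm_apply σ b
  have hne : a ≠ b := by
    intro e; rw [e] at hab; omega
  have hpqne : p ≠ q := fun e => hne (by rw [← hσp, ← hσq, e])
  have hT : ∀ k : Fin n, (Equiv.swap a b * σ) k =
      if k = p then b else if k = q then a else σ k := by
    intro k
    by_cases hk : k = p
    · simp [hk, hσp, Equiv.swap_apply_left]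
    · by_cases hk' : k = q
      · simp [hk, hk', hσq, Equiv.swap_apply_right, Ne.symm hpqne]
      · have h1 : σ k ≠ a := fun e => hk (by rw [hp, ← e]; simp)
        have h2 : σ k ≠ b := fun e => hk' (by rw [hq, ← e]; simp)
        simp [hk, hk', Equiv.swap_apply_of_ne_of_ne h1 h2]
  have hvala : ∀ k : Fin n, k ≠ p → (σ k : ℕ) ≠ (a : ℕ) := by
    intro k hk e
    exact hk (by rw [hp, ← Fin.val_injective e]; simp)
  have hvalb : ∀ k : Fin n, k ≠ q → (σ k : ℕ) ≠ (b : ℕ) := by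
    intro k hk e
    exact hk (by rw [hq, ← Fin.val_injective e]; simp)
  by_cases hj : j = q
  · -- the entry at position q increases by 1
    subst hj
    rw [if_pos rfl]
    have hset : (Finset.univ.filter
        (fun k : Fin n => k ≤ q ∧ (Equiv.swap a b * σ) q ≤ (Equiv.swap a b * σ) k)) =
        insert p (Finset.univ.filter (fun k : Fin n => k ≤ q ∧ σ q ≤ σ k)) := by
      ext k
      simp only [Finset.mem_filter, Finset.mem_insert, Finset.mem_univ, true_and]
      rw [hT q, if_neg (Ne.symm hpqne), if_pos rfl, hT k]
      by_cases hk : k = p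
      · subst hk
        rw [if_pos rfl]
        constructor
        · intro _; left; rfl
        · intro _
          refine ⟨le_of_lt hpq, ?_⟩
          rw [Fin.le_def]; omega
      · rw [if_neg hk]
        by_cases hk' : k = q
        · subst hk'
          simp [hσq, le_refl, hk]
        · rw [if_neg hk']
          have h1 := hvala k hk
          have h2 := hvalb k hk'
          simp only [hk, false_or, hσq]
          constructor
          · rintro ⟨hle, hge⟩
            refine ⟨hle, ?_⟩
            rw [Fin.le_def] at hge ⊢; omega
          · rintro ⟨hle, hge⟩
            refine ⟨hle, ?_⟩
            rw [Fin.le_def] at hge ⊢; omega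
    have hnotmem : p ∉ Finset.univ.filter (fun k : Fin n => k ≤ q ∧ σ q ≤ σ k) := by
      simp only [Finset.mem_filter, Finset.mem_univ, true_and, not_and]
      intro _
      rw [hσp, hσq, Fin.le_def]
      omega
    rw [linv, linv, hset, Finset.card_insert_of_notMem hnotmem]
  · -- other entries are unchanged
    rw [if_neg hj, Nat.add_zero, linv, linv]
    congr 1
    apply Finset.filter_congr
    intro k _
    refine and_congr_right fun hkj => ?_
    rw [hT j, hT k, if_neg hj]
    by_cases hjp : j = p
    · rw [if_pos hjp]
      have hkq : k ≠ q := by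
        intro e
        rw [e] at hkj
        rw [hjp] at hkj
        exact absurd hkj (not_le.2 hpq)
      by_cases hkp : k = p
      · rw [if_pos hkp, hjp, hkp]
        simp [hσp]
      · rw [if_neg hkp, if_neg hkq, hjp, hσp]
        have h1 := hvala k hkp
        rw [Fin.le_def, Fin.le_def]
        constructor <;> (intro hx; omega)
    · rw [if_neg hjp]
      have h1 := hvala j hjp
      have h2 := hvalb j hj
      by_cases hkp : k = p
      · rw [if_pos hkp, hkp, hσp]
        rw [Fin.le_def, Fin.le_def]
        constructor <;> (intro hx; omega)
      · by_cases hkq : k = q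
        · rw [if_neg hkp, if_pos hkq, hkq, hσq]
          rw [Fin.le_def, Fin.le_def]
          constructor <;> (intro hx; omega)
        · rw [if_neg hkp, if_neg hkq]

/-- The sum of the left inversion vector. -/
def Ssum (σ : Equiv.Perm (Fin n)) : ℕ := ∑ i, linv σ i

lemma Ssum_swap (σ : Equiv.Perm (Fin n)) (a b : Fin n) (hab : (a : ℕ) + 1 = (b : ℕ))
    (hpq : σ⁻¹ a < σ⁻¹ b) :
    Ssum (Equiv.swap a b * σ) = Ssum σ + 1 := by
  unfold Ssum
  rw [Finset.sum_congr rfl (fun j _ => linv_swap σ a b hab hpq j),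
    Finset.sum_add_distrib]
  congr 1
  simp

lemma n_le_Ssum (σ : Equiv.Perm (Fin n)) : n ≤ Ssum σ := by
  calc n = ∑ _i : Fin n, 1 := by simp
  _ ≤ Ssum σ := Finset.sum_le_sum fun i _ => linv_pos σ i

lemma Ssum_one : Ssum (1 : Equiv.Perm (Fin n)) = n := by
  unfold Ssum
  have : ∀ i : Fin n, linv (1 : Equiv.Perm (Fin n)) i = 1 := by
    intro i
    rw [linv]
    have : (Finset.univ.filter (fun j : Fin n => j ≤ i ∧ (1 : Equiv.Perm (Fin n)) i ≤ (1 : Equiv.Perm (Fin n)) j)) = {i} := by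
      ext k
      simp only [Finset.mem_filter, Finset.mem_univ, true_and, Finset.mem_singleton]
      simp only [Equiv.Perm.coe_one, id_eq]
      constructor
      · rintro ⟨h1, h2⟩; exact le_antisymm h1 h2
      · rintro rfl; exact ⟨le_refl _, le_refl _⟩
    rw [this, Finset.card_singleton]
  simp [this]

lemma Ssum_swap_cases (σ : Equiv.Perm (Fin n)) (a b : Fin n) (hab : (a : ℕ) + 1 = (b : ℕ)) :
    (σ⁻¹ a < σ⁻¹ b ∧ Ssum (Equiv.swap a b * σ) = Ssum σ + 1) ∨
    (σ⁻¹ b < σ⁻¹ a ∧ Ssum σ = Ssum (Equiv.swap a b * σ) + 1) := by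
  rcases lt_trichotomy (σ⁻¹ a) (σ⁻¹ b) with hlt | heq | hgt
  · exact Or.inl ⟨hlt, Ssum_swap σ a b hab hlt⟩
  · exfalso
    have : a = b := σ⁻¹.injective heq
    rw [this] at hab; omega
  · refine Or.inr ⟨hgt, ?_⟩
    have hinv : (Equiv.swap a b * σ)⁻¹ a < (Equiv.swap a b * σ)⁻¹ b := by
      have e1 : (Equiv.swap a b * σ)⁻¹ a = σ⁻¹ b := by
        simp [mul_inv_rev, Equiv.swap_apply_left]
      have e2 : (Equiv.swap a b * σ)⁻¹ b = σ⁻¹ a := by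
        simp [mul_inv_rev, Equiv.swap_apply_right]
      rw [e1, e2]; exact hgt
    have := Ssum_swap (Equiv.swap a b * σ) a b hab hinv
    rwa [← mul_assoc, Equiv.swap_mul_self, one_mul] at this

lemma adj_hab {τ : Equiv.Perm (Fin n)} (hτ : IsAdjTransp τ) :
    ∃ a b : Fin n, (a : ℕ) + 1 = (b : ℕ) ∧ τ = Equiv.swap a b := by
  obtain ⟨i, hi, rfl⟩ := hτ
  exact ⟨⟨i, Nat.lt_of_succ_lt hi⟩, ⟨i + 1, hi⟩, rfl, rfl⟩

/-- Upper bound: any word of adjacent transpositions with product σ has length at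
least `Ssum σ - n`. -/
lemma Ssum_prod_le (l : List (Equiv.Perm (Fin n))) (hl : ∀ τ ∈ l, IsAdjTransp τ) :
    Ssum l.prod ≤ n + l.length := by
  induction l with
  | nil => simp [Ssum_one]
  | cons τ l ih =>
    have hτ := hl τ List.mem_cons_self
    obtain ⟨a, b, hab, rfl⟩ := adj_hab hτ
    have ih' := ih (fun τ' hτ' => hl τ' (List.mem_cons_of_mem _ hτ'))
    rw [List.prod_cons]
    rcases Ssum_swap_cases l.prod a b hab with ⟨_, he⟩ | ⟨_, he⟩ <;>
      simp only [List.length_cons] <;> omega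

lemma exists_descent (σ : Equiv.Perm (Fin n)) (hσ : σ ≠ 1) :
    ∃ a b : Fin n, (a : ℕ) + 1 = (b : ℕ) ∧ σ⁻¹ b < σ⁻¹ a := by
  by_contra hc
  push_neg at hc
  apply hσ
  have hmono : StrictMono (fun x => σ⁻¹ x : Fin n → Fin n) := by
    cases n with
    | zero => intro x; exact absurd x.isLt (by omega)
    | succ m =>
      rw [Fin.strictMono_iff_lt_succ]
      intro i
      have hab : ((Fin.castSucc i : Fin (m + 1)) : ℕ) + 1 = ((i.succ : Fin (m + 1)) : ℕ) := by
        simp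
      have hle := hc (Fin.castSucc i) i.succ hab
      have hne : σ⁻¹ (Fin.castSucc i) ≠ σ⁻¹ i.succ := by
        intro e
        have : (Fin.castSucc i : Fin (m + 1)) = i.succ := σ⁻¹.injective e
        have := congrArg Fin.val this
        simp at this
      exact lt_of_le_of_ne hle hne
  have hid : (fun x => σ⁻¹ x : Fin n → Fin n) = id := by
    refine (@StrictMono.range_inj (Fin n) (Fin n) _ _ (inferInstance : WellFoundedLT (Fin n)) _ _ hmono strictMono_id).1 ?_
    rw [Set.range_id, Set.range_eq_univ.2 (Equiv.surjective σ⁻¹)]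
  have : σ⁻¹ = 1 := Equiv.ext fun x => congrFun hid x
  rw [← inv_inv σ, this, inv_one]

/-- Existence of a word realizing `Ssum σ - n`. -/
lemma exists_word (m : ℕ) : ∀ σ : Equiv.Perm (Fin n), Ssum σ = m →
    ∃ l : List (Equiv.Perm (Fin n)), (∀ τ ∈ l, IsAdjTransp τ) ∧ l.prod = σ ∧
      l.length + n = Ssum σ := by
  induction m using Nat.strong_induction_on with
  | _ m ih =>
    intro σ hm
    by_cases hσ : σ = 1
    · exact ⟨[], by simp, by simp [hσ], by simp [hσ, Ssum_one]⟩
    · obtain ⟨a, b, hab, hdesc⟩ := exists_descent σ hσ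
      have hcases := Ssum_swap_cases σ a b hab
      have he : Ssum σ = Ssum (Equiv.swap a b * σ) + 1 := by
        rcases hcases with ⟨hlt, _⟩ | ⟨_, he⟩
        · exact absurd hlt (not_lt.2 (le_of_lt hdesc))
        · exact he
      obtain ⟨l, hl1, hl2, hl3⟩ := ih (Ssum (Equiv.swap a b * σ))
        (by omega) (Equiv.swap a b * σ) rfl
      refine ⟨Equiv.swap a b :: l, ?_, ?_, ?_⟩
      · intro τ hτ
        rcases List.mem_cons.1 hτ with rfl | hτ'
        · refine ⟨(a : ℕ), by omega, ?_⟩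
          congr 1 <;> apply Fin.ext <;> simp [hab]
        · exact hl1 τ hτ'
      · rw [List.prod_cons, hl2, ← mul_assoc, Equiv.swap_mul_self, one_mul]
      · simp only [List.length_cons]; omega

lemma coxLength_add (σ : Equiv.Perm (Fin n)) : coxLength σ + n = Ssum σ := by
  obtain ⟨l, hl1, hl2, hl3⟩ := exists_word (Ssum σ) σ rfl
  have hmem : l.length ∈ {k | ∃ l' : List (Equiv.Perm (Fin n)),
      l'.length = k ∧ (∀ τ ∈ l', IsAdjTransp τ) ∧ l'.prod = σ} := ⟨l, rfl, hl1, hl2⟩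
  have hle : coxLength σ ≤ l.length := Nat.sInf_le hmem
  have hmem' : coxLength σ ∈ {k | ∃ l' : List (Equiv.Perm (Fin n)),
      l'.length = k ∧ (∀ τ ∈ l', IsAdjTransp τ) ∧ l'.prod = σ} :=
    Nat.sInf_mem (Set.nonempty_of_mem hmem)
  obtain ⟨l', hl1', hl2', hl3'⟩ := hmem'
  have := Ssum_prod_le l' hl2'
  rw [hl3'] at this
  rw [hl1'] at this
  -- `this : Ssum σ ≤ n + coxLength σ`
  omega

end Aux

/-- If `σ' = τ_i σ` for an adjacent transposition `τ_i` and the Coxeter length of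
`σ'` is strictly greater than that of `σ`, then `R(σ') > R(σ)`. -/
theorem stmt_10 (n : ℕ) (σ : Equiv.Perm (Fin n)) (i : ℕ) (h : i + 1 < n)
    (hlen : coxLength σ <
      coxLength (Equiv.swap (⟨i, Nat.lt_of_succ_lt h⟩ : Fin n) ⟨i + 1, h⟩ * σ)) :
    TRN σ < TRN (Equiv.swap (⟨i, Nat.lt_of_succ_lt h⟩ : Fin n) ⟨i + 1, h⟩ * σ) := by
  set a : Fin n := ⟨i, Nat.lt_of_succ_lt h⟩ with ha
  set b : Fin n := ⟨i + 1, h⟩ with hb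
  have hab : (a : ℕ) + 1 = (b : ℕ) := rfl
  have hSs : Ssum σ < Ssum (Equiv.swap a b * σ) := by
    have h1 := coxLength_add σ
    have h2 := coxLength_add (Equiv.swap a b * σ)
    omega
  have hpq : σ⁻¹ a < σ⁻¹ b := by
    rcases Ssum_swap_cases σ a b hab with ⟨hlt, _⟩ | ⟨_, he⟩
    · exact hlt
    · omega
  have hlv := linv_swap σ a b hab hpq
  set q := σ⁻¹ b with hq
  have hprod : TRN (Equiv.swap a b * σ) = (linv σ q + 1) * ∏ j ∈ Finset.univ.erase q, linv σ j := by
    rw [TRN, ← Finset.mul_prod_erase Finset.univ _ (Finset.mem_univ q)]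
    congr 1
    · rw [hlv q, if_pos rfl]
    · apply Finset.prod_congr rfl
      intro j hj
      rw [hlv j, if_neg (Finset.ne_of_mem_erase hj), Nat.add_zero]
  have hprod' : TRN σ = linv σ q * ∏ j ∈ Finset.univ.erase q, linv σ j := by
    rw [TRN, ← Finset.mul_prod_erase Finset.univ _ (Finset.mem_univ q)]
  rw [hprod, hprod']
  have hpos : 0 < ∏ j ∈ Finset.univ.erase q, linv σ j :=
    Finset.prod_pos fun j _ => linv_pos σ j
  exact (Nat.mul_lt_mul_right hpos).2 (Nat.lt_succ_self _)
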